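/- arXiv:2305.00200 — 2 statements merged into one kernel-verified Lean document; each statement's English description precedes it below -/
import Mathlib

section
/- The function H is p-coercive: there exists a constant C > 0 such that for every real x > s, |x|^p ≤ C·(1 + H(x)). -/
open Real

/-- The penalty function `H` from the paper's cost function, with parameters
`p > 2`, `s`, and reference point `x̄ = xb > s`. Powers are real powers. -/
noncomputable def Hpen (p s xb x : ℝ) : ℝ :=
  (p - 1) * ((x - s) / (xb - s)) ^ (1 + p) +
    (p + 1) * ((x - s) / (xb - s)) ^ (1 - p) - 2 * p

/-- AM–GM step: the penalty is nonnegative. -/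
lemma Hpen_key {p t : ℝ} (hp : 2 < p) (ht : 0 < t) :
    2 * p ≤ (p - 1) * t ^ (1 + p) + (p + 1) * t ^ (1 - p) := by
  have hw₁ : (0:ℝ) ≤ (p - 1) / (2 * p) := div_nonneg (by linarith) (by linarith)
  have hw₂ : (0:ℝ) ≤ (p + 1) / (2 * p) := div_nonneg (by linarith) (by linarith)
  have hp0 : (0:ℝ) < 2 * p := by linarith
  have hsum : (p - 1) / (2 * p) + (p + 1) / (2 * p) = 1 := by
    field_simp; ring
  have h := Real.geom_mean_le_arith_mean2_weighted hw₁ hw₂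
    (Real.rpow_nonneg ht.le (1 + p)) (Real.rpow_nonneg ht.le (1 - p)) hsum
  have hgm : (t ^ (1 + p)) ^ ((p - 1) / (2 * p)) * (t ^ (1 - p)) ^ ((p + 1) / (2 * p)) = 1 := by
    rw [← Real.rpow_mul ht.le, ← Real.rpow_mul ht.le, ← Real.rpow_add ht]
    have he : (1 + p) * ((p - 1) / (2 * p)) + (1 - p) * ((p + 1) / (2 * p)) = 0 := by
      field_simp; ring
    rw [he, Real.rpow_zero]
  rw [hgm] at h
  have h2 : 2 * p * 1 ≤
      2 * p * ((p - 1) / (2 * p) * t ^ (1 + p) + (p + 1) / (2 * p) * t ^ (1 - p)) :=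
    mul_le_mul_of_nonneg_left h hp0.le
  calc 2 * p = 2 * p * 1 := by ring
    _ ≤ _ := h2
    _ = (p - 1) * t ^ (1 + p) + (p + 1) * t ^ (1 - p) := by field_simp

/-- `H` is `p`-coercive: there is `C > 0` with `|x| ^ p ≤ C * (1 + H x)` for
all `x > s`. -/
theorem stmt_3 (p s xb : ℝ) (hp : 2 < p) (hxb : s < xb) :
    ∃ C : ℝ, 0 < C ∧ ∀ x : ℝ, s < x → |x| ^ p ≤ C * (1 + Hpen p s xb x) := by
  obtain ⟨A, hA⟩ : ∃ a : ℝ, a = max |s| (xb - s) := ⟨_, rfl⟩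
  have hA0 : 0 < A := by rw [hA]; exact lt_max_of_lt_right (by linarith)
  obtain ⟨C', hC'⟩ : ∃ c : ℝ, c = 2 + (1 + 2 * p) / (p - 1) := ⟨_, rfl⟩
  have hp1 : (0:ℝ) < p - 1 := by linarith
  have hdiv : (0:ℝ) ≤ (1 + 2 * p) / (p - 1) := div_nonneg (by linarith) hp1.le
  have hC'2 : (2:ℝ) ≤ C' := by rw [hC']; linarith
  have hC'0 : (0:ℝ) < C' := by linarith
  refine ⟨(2 * A) ^ p * C', by positivity, fun x hx => ?_⟩
  obtain ⟨t, htdef⟩ : ∃ u : ℝ, u = (x - s) / (xb - s) := ⟨_, rfl⟩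
  have ht : 0 < t := by
    rw [htdef]; exact div_pos (by linarith) (by linarith)
  have hHpen : Hpen p s xb x = (p - 1) * t ^ (1 + p) + (p + 1) * t ^ (1 - p) - 2 * p := by
    rw [Hpen, htdef]
  have hH : 0 ≤ Hpen p s xb x := by
    have := Hpen_key hp ht
    rw [hHpen]; linarith
  have htp1 : (p - 1) * t ^ (1 + p) ≤ Hpen p s xb x + 2 * p := by
    have h2 : 0 ≤ (p + 1) * t ^ (1 - p) :=
      mul_nonneg (by linarith) (Real.rpow_nonneg ht.le _)
    rw [hHpen]; linarith
  have htp : t ^ p ≤ 1 + t ^ (1 + p) := by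
    rcases le_or_gt t 1 with h1 | h1
    · have h2 : t ^ p ≤ 1 := Real.rpow_le_one ht.le h1 (by linarith)
      have h3 : (0:ℝ) ≤ t ^ (1 + p) := Real.rpow_nonneg ht.le _
      linarith
    · have := Real.rpow_le_rpow_of_exponent_le h1.le (by linarith : p ≤ 1 + p)
      linarith
  have hxbound : |x| ≤ 2 * A * max 1 t := by
    have hx' : x = s + t * (xb - s) := by
      have : t * (xb - s) = x - s := by
        rw [htdef]; exact div_mul_cancel₀ _ (by linarith)
      linarith
    have htA : 0 ≤ t * (xb - s) := mul_nonneg ht.le (by linarith)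
    have h1 : |x| ≤ |s| + t * (xb - s) := by
      calc |x| = |s + t * (xb - s)| := by rw [← hx']
        _ ≤ |s| + |t * (xb - s)| := abs_add_le _ _
        _ = |s| + t * (xb - s) := by rw [abs_of_nonneg htA]
    have h2 : |s| ≤ A * max 1 t := by
      rw [hA]
      exact le_trans (le_max_left _ _) (le_mul_of_one_le_right (by positivity) (le_max_left _ _))
    have h3 : t * (xb - s) ≤ A * max 1 t := by
      calc t * (xb - s) ≤ t * A := by
            rw [hA]; exact mul_le_mul_of_nonneg_left (le_max_right _ _) ht.le
        _ ≤ max 1 t * A := mul_le_mul_of_nonneg_right (le_max_right _ _) hA0.le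
        _ = A * max 1 t := mul_comm _ _
    linarith
  have hmaxp : (max 1 t) ^ p ≤ 1 + t ^ p := by
    rcases le_total t 1 with h1 | h1
    · rw [max_eq_left h1, Real.one_rpow]
      have : (0:ℝ) ≤ t ^ p := Real.rpow_nonneg ht.le _
      linarith
    · rw [max_eq_right h1]; linarith
  have hxp : |x| ^ p ≤ (2 * A) ^ p * (1 + t ^ p) := by
    have hmax0 : (0:ℝ) ≤ max 1 t := le_trans zero_le_one (le_max_left _ _)
    calc |x| ^ p ≤ (2 * A * max 1 t) ^ p :=
          Real.rpow_le_rpow (abs_nonneg x) hxbound (by linarith)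
      _ = (2 * A) ^ p * (max 1 t) ^ p := Real.mul_rpow (by positivity) hmax0
      _ ≤ (2 * A) ^ p * (1 + t ^ p) :=
          mul_le_mul_of_nonneg_left hmaxp (Real.rpow_nonneg (by positivity) _)
  have key : 1 + t ^ p ≤ C' * (1 + Hpen p s xb x) := by
    have h1 : t ^ (1 + p) ≤ (Hpen p s xb x + 2 * p) / (p - 1) := by
      rw [le_div_iff₀ hp1]; linarith
    have h2 : 1 + t ^ p ≤ 2 + (Hpen p s xb x + 2 * p) / (p - 1) := by linarith
    have e : C' * (1 + Hpen p s xb x) =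
        2 + (Hpen p s xb x + 2 * p) / (p - 1) +
          (2 * Hpen p s xb x + (1 + 2 * p * Hpen p s xb x) / (p - 1)) := by
      rw [hC']; field_simp; ring
    have h4 : 0 ≤ (1 + 2 * p * Hpen p s xb x) / (p - 1) :=
      div_nonneg (by nlinarith) hp1.le
    linarith
  calc |x| ^ p ≤ (2 * A) ^ p * (1 + t ^ p) := hxp
    _ ≤ (2 * A) ^ p * (C' * (1 + Hpen p s xb x)) :=
        mul_le_mul_of_nonneg_left key (Real.rpow_nonneg (by positivity) _)
    _ = (2 * A) ^ p * C' * (1 + Hpen p s xb x) := by ring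
end

section
/- Let p > 2, D > 0, s ∈ ℝ and c ∈ ℝ. Define z = ( D^p·c/(4(p²−1)) + (1/2)·√( (D^p·c/(2(p²−1)))² + 4·D^(2p) ) )^(1/p) and β* = s + z. Then z > 0 (so β* > s), z satisfies the quadratic equation in z^p: z^(2p) − z^p · D^p·c/(2(p²−1)) − D^(2p) = 0, and consequently (p²−1)·( (z/D)^p − (z/D)^(−p) ) = c/2. -/
open Real

/-- Algebraic core of the paper's "Analytic Formula for the Optimal
Characteristic": the explicit root `z` is positive, solves the quadratic in
`z ^ p`, and satisfies the first-order condition. -/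
theorem stmt_6 (p D s c : ℝ) (hp : 2 < p) (hD : 0 < D)
    (z : ℝ)
    (hz : z = (D ^ p * c / (4 * (p ^ 2 - 1)) +
        (1 / 2) * Real.sqrt ((D ^ p * c / (2 * (p ^ 2 - 1))) ^ 2 +
          4 * D ^ (2 * p))) ^ (1 / p))
    (βstar : ℝ) (hβ : βstar = s + z) :
    0 < z ∧ s < βstar ∧
      z ^ (2 * p) - z ^ p * (D ^ p * c / (2 * (p ^ 2 - 1))) - D ^ (2 * p) = 0 ∧
      (p ^ 2 - 1) * ((z / D) ^ p - (z / D) ^ (-p)) = c / 2 := by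
  have hp0 : (0:ℝ) < p := by linarith
  have hp0' : p ≠ 0 := ne_of_gt hp0
  have hpsq : (0:ℝ) < p ^ 2 - 1 := by nlinarith
  have hps : p ^ 2 - 1 ≠ 0 := ne_of_gt hpsq
  have hDp : (0:ℝ) < D ^ p := Real.rpow_pos_of_pos hD p
  have hDpne : D ^ p ≠ 0 := ne_of_gt hDp
  have hD2p : (0:ℝ) < D ^ (2 * p) := Real.rpow_pos_of_pos hD _
  have hD2p' : D ^ (2 * p) = (D ^ p) ^ 2 := by
    rw [mul_comm, Real.rpow_mul hD.le, Real.rpow_two]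
  set a := D ^ p * c / (2 * (p ^ 2 - 1)) with ha
  set X := a ^ 2 + 4 * D ^ (2 * p) with hXdef
  have hX : (0:ℝ) ≤ X := by positivity
  have hsq : Real.sqrt X ^ 2 = X := Real.sq_sqrt hX
  have hgt : |a| < Real.sqrt X := by
    rw [← Real.sqrt_sq_eq_abs]
    exact Real.sqrt_lt_sqrt (sq_nonneg a) (by rw [hXdef]; linarith)
  have hgt' : -a < Real.sqrt X := lt_of_le_of_lt (neg_le_abs a) hgt
  set B : ℝ := a / 2 + (1 / 2) * Real.sqrt X with hBdef
  have hXval : X = a ^ 2 + 4 * (D ^ p) ^ 2 := by rw [hXdef, hD2p']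
  have haval : a * (2 * (p ^ 2 - 1)) = D ^ p * c := by rw [ha]; field_simp
  have hkey : D ^ p * c / (4 * (p ^ 2 - 1)) = a / 2 := by rw [ha, div_div]; congr 1; ring
  clear_value B X a
  have hB : 0 < B := by rw [hBdef]; linarith
  have hBne : B ≠ 0 := ne_of_gt hB
  have hzB : z = B ^ (1 / p) := by rw [hz, hkey, ← hBdef]
  have hz0 : 0 < z := by rw [hzB]; exact Real.rpow_pos_of_pos hB _
  have hzp : z ^ p = B := by
    rw [hzB, ← Real.rpow_mul hB.le, one_div_mul_cancel hp0', Real.rpow_one]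
  have hz2p : z ^ (2 * p) = B ^ 2 := by
    rw [mul_comm, Real.rpow_mul hz0.le, hzp, Real.rpow_two]
  have hBsq : B ^ 2 = a ^ 2 / 4 + (a / 2) * Real.sqrt X + X / 4 := by
    rw [hBdef]; linear_combination (1 / 4 : ℝ) * hsq
  have hquad : B ^ 2 - B * a - (D ^ p) ^ 2 = 0 := by
    rw [hBsq, hBdef]; linear_combination (1/4 : ℝ) * hXval
  have hq2 : 2 * (p ^ 2 - 1) * B ^ 2 - B * (D ^ p * c)
      - 2 * (p ^ 2 - 1) * (D ^ p) ^ 2 = 0 := by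
    linear_combination (2 * (p ^ 2 - 1)) * hquad + B * haval
  refine ⟨hz0, by rw [hβ]; linarith, ?_, ?_⟩
  · rw [hz2p, hzp, hD2p']; linarith [hquad]
  · have hzDp : (z / D) ^ p = B / D ^ p := by
      rw [Real.div_rpow hz0.le hD.le, hzp]
    have hzDn : (z / D) ^ (-p) = D ^ p / B := by
      rw [Real.rpow_neg (by positivity : (0:ℝ) ≤ z / D), hzDp, inv_div]
    rw [hzDp, hzDn]
    field_simp
    linear_combination hq2
end
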